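/- For φ ∈ (0, π), the ratio B_c(φ)/B_s(φ) is strictly decreasing; indeed (B_c⁴/B_s⁴)′ = −2 sin φ (3−3cos φ+cos²φ)(2−cos φ)(3+cos φ) / [(1−cos φ)³(7−4cos φ+cos²φ)²] < 0. -/

import Mathlib

open Real Set

noncomputable def α₂ (φ : ℝ) : ℂ :=
  1 + ((Real.cos φ : ℂ) - 1) * Complex.exp (2 * Real.pi * Complex.I / 3)

noncomputable def Bc (φ : ℝ) : ℝ := ‖α₂ φ‖

noncomputable def Bs (φ : ℝ) : ℝ :=
  ((1 - Real.cos φ) ^ 2 * (7 - 4 * Real.cos φ + Real.cos φ ^ 2)) ^ ((1 : ℝ) / 4)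

lemma alpha_eq (φ : ℝ) :
    α₂ φ = ((3 - Real.cos φ) / 2 : ℝ) + ((Real.cos φ - 1) * Real.sqrt 3 / 2 : ℝ) * Complex.I := by
  unfold α₂
  rw [show (2 * (Real.pi : ℂ) * Complex.I / 3) = ((2 * Real.pi / 3 : ℝ) : ℂ) * Complex.I by
    push_cast; ring]
  rw [Complex.exp_mul_I, ← Complex.ofReal_cos, ← Complex.ofReal_sin]
  have hc : Real.cos (2 * Real.pi / 3) = -(1 / 2) := by
    rw [show 2 * Real.pi / 3 = Real.pi - Real.pi / 3 by ring, Real.cos_pi_sub,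
      Real.cos_pi_div_three]
  have hs : Real.sin (2 * Real.pi / 3) = Real.sqrt 3 / 2 := by
    rw [show 2 * Real.pi / 3 = Real.pi - Real.pi / 3 by ring, Real.sin_pi_sub,
      Real.sin_pi_div_three]
  rw [hc, hs]; push_cast; ring

lemma Bc_sq (φ : ℝ) : Bc φ ^ 2 = Real.cos φ ^ 2 - 3 * Real.cos φ + 3 := by
  have h3 : Real.sqrt 3 ^ 2 = 3 := Real.sq_sqrt (by norm_num)
  rw [Bc, Complex.sq_norm, alpha_eq, Complex.normSq_add_mul_I]
  linear_combination ((Real.cos φ - 1) ^ 2 / 4) * h3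

lemma Bc_pow4 (φ : ℝ) : Bc φ ^ 4 = (Real.cos φ ^ 2 - 3 * Real.cos φ + 3) ^ 2 := by
  rw [show (4 : ℕ) = 2 * 2 by norm_num, pow_mul, Bc_sq]

lemma Bs_pow4 (φ : ℝ) :
    Bs φ ^ 4 = (1 - Real.cos φ) ^ 2 * (7 - 4 * Real.cos φ + Real.cos φ ^ 2) := by
  have hb : (0 : ℝ) ≤ (1 - Real.cos φ) ^ 2 * (7 - 4 * Real.cos φ + Real.cos φ ^ 2) := by
    apply mul_nonneg (sq_nonneg _)
    nlinarith [sq_nonneg (Real.cos φ - 2)]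
  rw [Bs, ← Real.rpow_natCast (_ ^ ((1 : ℝ) / 4)) 4, ← Real.rpow_mul hb]
  norm_num

lemma ratio_eq :
    (fun x => Bc x ^ 4 / Bs x ^ 4) = fun x =>
      (Real.cos x ^ 2 - 3 * Real.cos x + 3) ^ 2 /
        ((1 - Real.cos x) ^ 2 * (7 - 4 * Real.cos x + Real.cos x ^ 2)) := by
  funext x; rw [Bc_pow4, Bs_pow4]

lemma cos_bounds {φ : ℝ} (hφ : φ ∈ Ioo (0 : ℝ) π) :
    -1 < Real.cos φ ∧ Real.cos φ < 1 := by
  have hs : 0 < Real.sin φ := Real.sin_pos_of_pos_of_lt_pi hφ.1 hφ.2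
  constructor <;>
    nlinarith [Real.sin_sq_add_cos_sq φ, mul_pos hs hs, Real.neg_one_le_cos φ,
      Real.cos_le_one φ]

lemma hasDeriv_ratio {φ : ℝ} (hφ : φ ∈ Ioo (0 : ℝ) π) :
    HasDerivAt (fun x => Bc x ^ 4 / Bs x ^ 4)
      (-(2 * Real.sin φ * (3 - 3 * Real.cos φ + Real.cos φ ^ 2) *
          (2 - Real.cos φ) * (3 + Real.cos φ)) /
        ((1 - Real.cos φ) ^ 3 * (7 - 4 * Real.cos φ + Real.cos φ ^ 2) ^ 2)) φ := by
  obtain ⟨h1, h2⟩ := cos_bounds hφ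
  set c := Real.cos φ with hc
  have hcos : HasDerivAt Real.cos (-Real.sin φ) φ := Real.hasDerivAt_cos φ
  have hy : HasDerivAt (fun y : ℝ => y ^ 2 - 3 * y + 3) (2 * c - 3) c := by
    simpa using ((hasDerivAt_pow 2 c).sub ((hasDerivAt_id c).const_mul 3)).add_const 3
  have hnum : HasDerivAt (fun y : ℝ => (y ^ 2 - 3 * y + 3) ^ 2)
      (2 * (c ^ 2 - 3 * c + 3) ^ 1 * (2 * c - 3)) c := by
    simpa [Pi.pow_def] using hy.pow 2
  have hd1 : HasDerivAt (fun y : ℝ => (1 - y) ^ 2) (2 * (1 - c) ^ 1 * -1) c := by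
    simpa [Pi.pow_def] using ((hasDerivAt_id c).const_sub 1).pow 2
  have hd2 : HasDerivAt (fun y : ℝ => 7 - 4 * y + y ^ 2) (-(4 * 1) + 2 * c ^ 1) c := by
    simpa [Pi.add_def] using (((hasDerivAt_id c).const_mul 4).const_sub 7).add (hasDerivAt_pow 2 c)
  have hden := hd1.mul hd2
  have hq : 0 < 7 - 4 * c + c ^ 2 := by nlinarith [sq_nonneg (c - 2)]
  have h1c : 0 < 1 - c := by linarith
  have hne : (1 - c) ^ 2 * (7 - 4 * c + c ^ 2) ≠ 0 :=
    ne_of_gt (mul_pos (pow_pos h1c 2) hq)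
  have hA := hnum.div hden hne
  have hF := hA.comp φ hcos
  simp only [Function.comp_def, Pi.div_apply, Pi.mul_apply] at hF
  rw [ratio_eq]
  refine HasDerivAt.congr_deriv hF ?_
  have hne2 : (1 - c) ≠ 0 := ne_of_gt h1c
  have hne3 : (7 - 4 * c + c ^ 2) ≠ 0 := ne_of_gt hq
  field_simp
  ring

lemma deriv_key {φ : ℝ} (hφ : φ ∈ Ioo (0 : ℝ) π) :
    deriv (fun x => Bc x ^ 4 / Bs x ^ 4) φ =
        -(2 * Real.sin φ * (3 - 3 * Real.cos φ + Real.cos φ ^ 2) *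
            (2 - Real.cos φ) * (3 + Real.cos φ)) /
          ((1 - Real.cos φ) ^ 3 * (7 - 4 * Real.cos φ + Real.cos φ ^ 2) ^ 2) ∧
      deriv (fun x => Bc x ^ 4 / Bs x ^ 4) φ < 0 := by
  have hd := (hasDeriv_ratio hφ).deriv
  refine ⟨hd, ?_⟩
  rw [hd]
  obtain ⟨h1, h2⟩ := cos_bounds hφ
  have hs : 0 < Real.sin φ := Real.sin_pos_of_pos_of_lt_pi hφ.1 hφ.2
  apply div_neg_of_neg_of_pos
  · have : 0 < 2 * Real.sin φ * (3 - 3 * Real.cos φ + Real.cos φ ^ 2) *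
        (2 - Real.cos φ) * (3 + Real.cos φ) := by
      have hp1 : 0 < 3 - 3 * Real.cos φ + Real.cos φ ^ 2 := by
        nlinarith [sq_nonneg (Real.cos φ - 3 / 2)]
      have hp2 : 0 < 2 - Real.cos φ := by linarith
      have hp3 : 0 < 3 + Real.cos φ := by linarith
      positivity
    linarith
  · have hq : 0 < 7 - 4 * Real.cos φ + Real.cos φ ^ 2 := by
      nlinarith [sq_nonneg (Real.cos φ - 2)]
    have h1c : 0 < 1 - Real.cos φ := by linarith
    positivity

theorem Bc_div_Bs_strictAnti :
    StrictAntiOn (fun φ => Bc φ / Bs φ) (Ioo 0 π) ∧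
      ∀ φ ∈ Ioo (0 : ℝ) π,
        deriv (fun x => Bc x ^ 4 / Bs x ^ 4) φ =
          -(2 * Real.sin φ * (3 - 3 * Real.cos φ + Real.cos φ ^ 2) *
              (2 - Real.cos φ) * (3 + Real.cos φ)) /
            ((1 - Real.cos φ) ^ 3 * (7 - 4 * Real.cos φ + Real.cos φ ^ 2) ^ 2) ∧
        deriv (fun x => Bc x ^ 4 / Bs x ^ 4) φ < 0 := by
  have hanti4 : StrictAntiOn (fun x => Bc x ^ 4 / Bs x ^ 4) (Ioo 0 π) := by
    apply strictAntiOn_of_deriv_neg (convex_Ioo 0 π)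
    · rw [ratio_eq]
      apply ContinuousOn.div
      · fun_prop
      · fun_prop
      · intro x hx
        obtain ⟨h1, h2⟩ := cos_bounds hx
        have hq : 0 < 7 - 4 * Real.cos x + Real.cos x ^ 2 := by
          nlinarith [sq_nonneg (Real.cos x - 2)]
        have h1c : 0 < 1 - Real.cos x := by linarith
        positivity
    · intro x hx
      rw [interior_Ioo] at hx
      exact (deriv_key hx).2
  refine ⟨?_, fun φ hφ => deriv_key hφ⟩
  intro x hx y hy hxy
  have h4 := hanti4 hx hy hxy
  simp only [← div_pow] at h4
  have hbnn : 0 ≤ Bc x / Bs x := by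
    apply div_nonneg (norm_nonneg _)
    exact Real.rpow_nonneg (mul_nonneg (sq_nonneg _) (by nlinarith [sq_nonneg (Real.cos x - 2)])) _
  exact lt_of_pow_lt_pow_left₀ 4 hbnn h4
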